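/- For every integer F ≥ 1, viewing X = {−F,…,−1,1,…,F} as a subset of ℚ (with |X| = 2F), the leading coefficient of the unique polynomial R of degree less than 2F with R(i) = 1/i for every i ∈ X satisfies Σ_{i ∈ X} (1/i)·Π_{j ∈ X, j ≠ i} 1/(i − j) = (−1)^{F+1}/(F!)², which is nonzero. -/

import Mathlib

open Finset

lemma prodIccPos (n : ℕ) : ∏ j ∈ Finset.Icc (1:ℤ) (n:ℤ), (j:ℚ) = n.factorial := by
  induction n with
  | zero => simp
  | succ n ih =>
    have h : Finset.Icc (1:ℤ) ((n:ℤ)+1) = insert ((n:ℤ)+1) (Finset.Icc (1:ℤ) (n:ℤ)) := by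
      ext x; simp; omega
    push_cast
    rw [h, Finset.prod_insert (by simp), ih, Nat.factorial_succ]
    push_cast; ring

lemma prodIccNeg (n : ℕ) : ∏ j ∈ Finset.Icc (-(n:ℤ)) (-1:ℤ), (j:ℚ) = (-1)^n * n.factorial := by
  have h : Finset.Icc (-(n:ℤ)) (-1:ℤ) = (Finset.Icc (1:ℤ) (n:ℤ)).image (fun x => -x) := by
    ext x
    simp only [mem_Icc, mem_image]
    constructor
    · intro hx; exact ⟨-x, by omega, by omega⟩
    · rintro ⟨a, ha, rfl⟩; omega
  rw [h, Finset.prod_image (by intro a _ b _ h; beta_reduce at h; omega)]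
  have : ∀ x ∈ Finset.Icc (1:ℤ) (n:ℤ), ((-x : ℤ) : ℚ) = (-1) * (x:ℚ) := by intros; push_cast; ring
  rw [Finset.prod_congr rfl this, Finset.prod_mul_distrib, prodIccPos]
  simp [Int.card_Icc]

lemma L1 (F : ℕ) (i : ℤ) (hi : i ∈ Finset.Icc (-(F:ℤ)) (F:ℤ)) :
    ∏ j ∈ (Finset.Icc (-(F:ℤ)) (F:ℤ)).erase i, ((i:ℚ) - (j:ℚ)) =
      (-1)^((F:ℤ) - i).toNat * (((F:ℤ) - i).toNat.factorial : ℚ) * (((F:ℤ) + i).toNat.factorial : ℚ) := by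
  simp only [mem_Icc] at hi
  have himg : ((Finset.Icc (-(F:ℤ)) (F:ℤ)).erase i).image (fun j => i - j)
      = Finset.Icc (i - (F:ℤ)) (-1:ℤ) ∪ Finset.Icc (1:ℤ) (i + (F:ℤ)) := by
    ext x
    simp only [mem_image, mem_erase, mem_Icc, mem_union]
    constructor
    · rintro ⟨a, ⟨ha0, ha1, ha2⟩, rfl⟩; omega
    · intro hx; exact ⟨i - x, by omega, by omega⟩
  have hinj : ∀ a ∈ (Finset.Icc (-(F:ℤ)) (F:ℤ)).erase i, ∀ b ∈ (Finset.Icc (-(F:ℤ)) (F:ℤ)).erase i,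
      i - a = i - b → a = b := by intro a _ b _ h; omega
  have := Finset.prod_image (f := fun x : ℤ => (x : ℚ)) (g := fun j : ℤ => i - j) hinj
  rw [himg] at this
  have hcast : ∀ j ∈ (Finset.Icc (-(F:ℤ)) (F:ℤ)).erase i, ((i - j : ℤ) : ℚ) = (i:ℚ) - (j:ℚ) := by
    intros; push_cast; ring
  rw [Finset.prod_congr rfl hcast] at this
  rw [← this]
  rw [Finset.prod_union (by simp only [Finset.disjoint_left, mem_Icc]; intro x hx; omega)]
  have h1 : i - (F:ℤ) = -((((F:ℤ) - i).toNat : ℕ) : ℤ) := by omega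
  have h2 : i + (F:ℤ) = ((((F:ℤ) + i).toNat : ℕ) : ℤ) := by omega
  rw [h1, h2, prodIccNeg, prodIccPos]

lemma Lterm (F : ℕ) (i : ℤ) (hi : i ∈ (Finset.Icc (-(F:ℤ)) (F:ℤ)).erase 0) :
    (i : ℚ)⁻¹ * ∏ j ∈ ((Finset.Icc (-(F:ℤ)) (F:ℤ)).erase 0).erase i, ((i:ℚ) - (j:ℚ))⁻¹ =
      (-1)^((F:ℤ) - i).toNat / ((((F:ℤ) - i).toNat.factorial : ℚ) * (((F:ℤ) + i).toNat.factorial : ℚ)) := by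
  simp only [mem_erase, mem_Icc] at hi
  obtain ⟨hi0, hil, hir⟩ := hi
  have hcomm : ((Finset.Icc (-(F:ℤ)) (F:ℤ)).erase 0).erase i
      = ((Finset.Icc (-(F:ℤ)) (F:ℤ)).erase i).erase 0 := Finset.erase_right_comm
  have h0mem : (0:ℤ) ∈ (Finset.Icc (-(F:ℤ)) (F:ℤ)).erase i := by
    simp only [mem_erase, mem_Icc]; omega
  have hins : (i:ℚ) * ∏ j ∈ ((Finset.Icc (-(F:ℤ)) (F:ℤ)).erase i).erase 0, ((i:ℚ) - (j:ℚ))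
      = ∏ j ∈ (Finset.Icc (-(F:ℤ)) (F:ℤ)).erase i, ((i:ℚ) - (j:ℚ)) := by
    have := Finset.mul_prod_erase _ (fun j : ℤ => (i:ℚ) - (j:ℚ)) h0mem
    simpa using this
  rw [hcomm, Finset.prod_inv_distrib, ← mul_inv, hins,
    L1 F i (by simp only [mem_Icc]; omega)]
  rw [div_eq_inv_mul]
  rw [mul_inv, mul_inv]
  rcases Nat.even_or_odd ((F:ℤ) - i).toNat with he | ho
  · rw [he.neg_one_pow]; simp [mul_comm]
  · rw [ho.neg_one_pow]; norm_num; ring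

lemma L2 (n M : ℕ) : ∑ m ∈ Finset.range (M+1), (-1:ℚ)^m * ((n+1).choose m : ℚ)
    = (-1)^M * (n.choose M : ℚ) := by
  induction M with
  | zero => simp
  | succ M ih =>
    rw [Finset.sum_range_succ, ih, Nat.choose_succ_succ n M]
    push_cast
    ring

lemma L3 (F : ℕ) (hF : 1 ≤ F) : ∑ m ∈ Finset.range F, (-1:ℚ)^m / ((m.factorial : ℚ) * ((2*F - m).factorial : ℚ))
    = (-1)^(F+1) / (2 * ((F.factorial : ℚ))^2) := by
  obtain ⟨M, rfl⟩ : ∃ M, F = M + 1 := ⟨F - 1, by omega⟩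
  have key : ∀ m ∈ Finset.range (M+1), (-1:ℚ)^m / ((m.factorial : ℚ) * ((2*(M+1) - m).factorial : ℚ))
      = ((-1:ℚ)^m * ((2*M+1+1).choose m : ℚ)) / ((2*(M+1)).factorial : ℚ) := by
    intro m hm
    simp only [Finset.mem_range] at hm
    have hle : m ≤ 2*(M+1) := by omega
    have h := Nat.choose_mul_factorial_mul_factorial hle
    have h2 : (2*M+1+1) = 2*(M+1) := by ring
    rw [h2]
    have hq : ((2*(M+1)).choose m : ℚ) * (m.factorial : ℚ) * ((2*(M+1) - m).factorial : ℚ)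
        = ((2*(M+1)).factorial : ℚ) := by exact_mod_cast congrArg (Nat.cast : ℕ → ℚ) h
    rw [div_eq_div_iff (by positivity) (by positivity)]
    linear_combination (-((-1:ℚ)^m)) * hq
  rw [Finset.sum_congr rfl key, ← Finset.sum_div, L2 (2*M+1) M]
  -- now : (-1)^M * C(2M+1, M) / (2(M+1))! = (-1)^(M+2) / (2 * ((M+1)!)^2)
  have hle : M ≤ 2*M+1 := by omega
  have h := Nat.choose_mul_factorial_mul_factorial hle
  have h2 : 2*M+1-M = M+1 := by omega
  rw [h2] at h
  have hq : ((2*M+1).choose M : ℚ) * (M.factorial : ℚ) * ((M+1).factorial : ℚ)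
      = ((2*M+1).factorial : ℚ) := by exact_mod_cast congrArg (Nat.cast : ℕ → ℚ) h
  have hfs : ((M+1).factorial : ℚ) = (M+1) * (M.factorial : ℚ) := by
    rw [Nat.factorial_succ]; push_cast; ring
  have hfs2 : ((2*(M+1)).factorial : ℚ) = (2*(M+1)) * ((2*M+1).factorial : ℚ) := by
    have : 2*(M+1) = (2*M+1) + 1 := by ring
    rw [this, Nat.factorial_succ]; push_cast; ring
  have hsign : ((-1:ℚ))^(M+1+1) = (-1)^M := by
    rw [pow_succ, pow_succ]; ring
  rw [hfs] at hq
  rw [hsign, div_eq_div_iff (by positivity) (by positivity), hfs2, hfs]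
  linear_combination ((-1:ℚ))^M * 2 * ((M:ℚ)+1) * hq

lemma sumEval (F : ℕ) (hF : 1 ≤ F) :
    ∑ i ∈ (Finset.Icc (-(F:ℤ)) (F:ℤ)).erase 0,
      (i : ℚ)⁻¹ * ∏ j ∈ ((Finset.Icc (-(F:ℤ)) (F:ℤ)).erase 0).erase i, ((i:ℚ) - (j:ℚ))⁻¹
    = (-1) ^ (F + 1) / (F.factorial : ℚ) ^ 2 := by
  rw [Finset.sum_congr rfl (fun i hi => Lterm F i hi)]
  have hsplit : (Finset.Icc (-(F:ℤ)) (F:ℤ)).erase 0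
      = Finset.Icc (-(F:ℤ)) (-1:ℤ) ∪ Finset.Icc (1:ℤ) (F:ℤ) := by
    ext x; simp only [mem_erase, mem_Icc, mem_union]; omega
  rw [hsplit, Finset.sum_union (by simp only [Finset.disjoint_left, mem_Icc]; intro x hx; omega)]
  have himg : Finset.Icc (-(F:ℤ)) (-1:ℤ) = (Finset.Icc (1:ℤ) (F:ℤ)).image (fun x => -x) := by
    ext x
    simp only [mem_Icc, mem_image]
    constructor
    · intro hx; exact ⟨-x, by omega, by omega⟩
    · rintro ⟨a, ha, rfl⟩; omega
  rw [himg, Finset.sum_image (by intro a _ b _ h; beta_reduce at h; omega)]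
  have hsame : ∀ k ∈ Finset.Icc (1:ℤ) (F:ℤ),
      (-1:ℚ)^((F:ℤ) - (-k)).toNat / ((((F:ℤ) - (-k)).toNat.factorial : ℚ) * (((F:ℤ) + (-k)).toNat.factorial : ℚ))
      = (-1:ℚ)^((F:ℤ) - k).toNat / ((((F:ℤ) - k).toNat.factorial : ℚ) * (((F:ℤ) + k).toNat.factorial : ℚ)) := by
    intro k hk
    simp only [mem_Icc] at hk
    have h1 : ((F:ℤ) - (-k)).toNat = ((F:ℤ) - k).toNat + 2 * k.toNat := by omega
    have h2 : ((F:ℤ) + (-k)).toNat = ((F:ℤ) - k).toNat := by omega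
    have h3 : ((F:ℤ) - (-k)).toNat = ((F:ℤ) + k).toNat := by omega
    rw [h2, h3, ← h3, h1, pow_add, pow_mul]
    norm_num [mul_comm]
  rw [Finset.sum_congr rfl hsame, ← two_mul]
  have himg2 : Finset.Icc (1:ℤ) (F:ℤ) = (Finset.Icc 1 F).image (fun k : ℕ => (k:ℤ)) := by
    ext x
    simp only [mem_Icc, mem_image]
    constructor
    · intro hx; exact ⟨x.toNat, by omega, by omega⟩
    · rintro ⟨a, ha, rfl⟩; omega
  rw [himg2, Finset.sum_image (by intro a _ b _ h; beta_reduce at h; omega)]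
  have hterm : ∀ k ∈ Finset.Icc 1 F,
      (-1:ℚ)^((F:ℤ) - (k:ℤ)).toNat / ((((F:ℤ) - (k:ℤ)).toNat.factorial : ℚ) * (((F:ℤ) + (k:ℤ)).toNat.factorial : ℚ))
      = (-1:ℚ)^(F - k) / (((F - k).factorial : ℚ) * ((2*F - (F - k)).factorial : ℚ)) := by
    intro k hk
    simp only [mem_Icc] at hk
    have h1 : ((F:ℤ) - (k:ℤ)).toNat = F - k := by omega
    have h2 : ((F:ℤ) + (k:ℤ)).toNat = 2*F - (F - k) := by omega
    rw [h1, h2]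
  rw [Finset.sum_congr rfl hterm]
  have hbij : ∑ k ∈ Finset.Icc 1 F,
      (-1:ℚ)^(F - k) / (((F - k).factorial : ℚ) * ((2*F - (F - k)).factorial : ℚ))
      = ∑ m ∈ Finset.range F, (-1:ℚ)^m / ((m.factorial : ℚ) * ((2*F - m).factorial : ℚ)) := by
    apply Finset.sum_nbij' (i := fun k => F - k) (j := fun m => F - m)
    · intro a ha; simp only [mem_Icc] at ha; simp only [Finset.mem_range]; omega
    · intro a ha; simp only [Finset.mem_range] at ha; simp only [mem_Icc]; omega
    · intro a ha; simp only [mem_Icc] at ha; omega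
    · intro a ha; simp only [Finset.mem_range] at ha; omega
    · intro a ha; rfl
  rw [hbij, L3 F hF]
  have hf : ((F.factorial : ℚ))^2 ≠ 0 := by positivity
  field_simp

lemma coeffPart (F : ℕ) (hF : 1 ≤ F) (X : Finset ℤ)
    (hX : X = (Finset.Icc (-(F : ℤ)) (F : ℤ)).erase 0) :
    (Lagrange.interpolate X (fun i => (i : ℚ)) (fun i => ((i : ℚ))⁻¹)).coeff (2 * F - 1) =
        ∑ i ∈ X, (i : ℚ)⁻¹ * ∏ j ∈ X.erase i, ((i : ℚ) - (j : ℚ))⁻¹ := by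
  have hcard : X.card = 2 * F := by
    rw [hX, Finset.card_erase_of_mem (by simp only [mem_Icc]; omega), Int.card_Icc]
    omega
  rw [Lagrange.interpolate_apply, Polynomial.finset_sum_coeff]
  apply Finset.sum_congr rfl
  intro i hi
  rw [Polynomial.coeff_C_mul]
  congr 1
  have hcarde : (X.erase i).card = 2 * F - 1 := by
    rw [Finset.card_erase_of_mem hi, hcard]
  rw [Lagrange.basis]
  have hco := Polynomial.coeff_prod_of_natDegree_le
    (s := X.erase i) (fun j => Lagrange.basisDivisor (i:ℚ) (j:ℚ)) 1
    (fun j hj => by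
      rcases eq_or_ne (i:ℚ) (j:ℚ) with h | h
      · rw [h, Lagrange.natDegree_basisDivisor_self]; omega
      · rw [Lagrange.natDegree_basisDivisor_of_ne h])
  rw [hcarde, mul_one] at hco
  rw [hco]
  apply Finset.prod_congr rfl
  intro j _
  show (Polynomial.C ((i:ℚ) - (j:ℚ))⁻¹ * (Polynomial.X - Polynomial.C (j:ℚ))).coeff 1 = _
  rw [Polynomial.coeff_C_mul, Polynomial.coeff_sub,
    Polynomial.coeff_X_one, Polynomial.coeff_C]
  norm_num

/-- Leading coefficient of the interpolant of 1/x on {-F,...,-1,1,...,F}. -/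
theorem statement17 (F : ℕ) (hF : 1 ≤ F)
    (X : Finset ℤ) (hX : X = (Finset.Icc (-(F : ℤ)) (F : ℤ)).erase 0) :
    (Lagrange.interpolate X (fun i => (i : ℚ)) (fun i => ((i : ℚ))⁻¹)).coeff (2 * F - 1) =
        ∑ i ∈ X, (i : ℚ)⁻¹ * ∏ j ∈ X.erase i, ((i : ℚ) - (j : ℚ))⁻¹ ∧
    ∑ i ∈ X, (i : ℚ)⁻¹ * ∏ j ∈ X.erase i, ((i : ℚ) - (j : ℚ))⁻¹ =
        (-1) ^ (F + 1) / (F.factorial : ℚ) ^ 2 ∧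
    ((-1 : ℚ) ^ (F + 1) / (F.factorial : ℚ) ^ 2) ≠ 0 := by
  refine ⟨coeffPart F hF X hX, ?_, ?_⟩
  · rw [hX]; exact sumEval F hF
  · apply div_ne_zero
    · exact pow_ne_zero _ (by norm_num)
    · positivity
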